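/- Let X be a random variable on k states with probabilities p_x, let α_x be real numbers with ∑_x |α_x| = δ and p_x + α_x ≥ 0, and define X' with probabilities (p_x + α_x)/(1 + ∑_x α_x). If δ ≤ 1/3, then |H(X') − H(X)| ≤ 2·H_b(2δ) + 3δ log k. -/

import Mathlib

open Real Finset

/-- Shannon entropy of a finitely supported distribution. -/
noncomputable def Hfin {α : Type*} [Fintype α] (p : α → ℝ) : ℝ := ∑ i, Real.negMulLog (p i)

/-- Discrete mutual information of a joint distribution on a finite grid:
`I(X,Y) = H(X) + H(Y) - H(X,Y)`. -/
noncomputable def MIfin {α β : Type*} [Fintype α] [Fintype β] (p : α × β → ℝ) : ℝ :=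
  Hfin (fun a => ∑ b, p (a, b)) + Hfin (fun b => ∑ a, p (a, b)) - Hfin p

lemma aux_negMulLog_add_le {a b : ℝ} (ha : 0 ≤ a) (hb : 0 ≤ b) :
    Real.negMulLog (a + b) ≤ Real.negMulLog a + Real.negMulLog b := by
  rcases ha.eq_or_lt with h | ha'
  · simp [← h]
  rcases hb.eq_or_lt with h | hb'
  · simp [← h]
  have h1 : Real.log a ≤ Real.log (a + b) := Real.log_le_log ha' (by linarith)
  have h2 : Real.log b ≤ Real.log (a + b) := Real.log_le_log hb' (by linarith)
  simp only [Real.negMulLog, neg_mul]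
  nlinarith [mul_le_mul_of_nonneg_left h1 ha, mul_le_mul_of_nonneg_left h2 hb]

lemma aux_negMulLog_le_add {a e : ℝ} (ha : 0 ≤ a) (he : 0 ≤ e) (h1 : a + e ≤ 1) :
    Real.negMulLog a ≤ Real.negMulLog (a + e) + e := by
  rcases ha.eq_or_lt with h | ha'
  · have h0 : Real.negMulLog (0 + e) = Real.negMulLog e := by rw [zero_add]
    rw [← h, h0, Real.negMulLog_zero]
    have := Real.negMulLog_nonneg he (by linarith)
    linarith
  have hae : 0 < a + e := by linarith
  have hlog : Real.log (a + e) - Real.log a ≤ e / a := by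
    rw [← Real.log_div hae.ne' ha'.ne']
    have h2 := Real.log_le_sub_one_of_pos (show 0 < (a + e) / a by positivity)
    have h3 : (a + e) / a - 1 = e / a := by field_simp; ring
    linarith
  have hlogae : Real.log (a + e) ≤ 0 := Real.log_nonpos hae.le h1
  have h3 : a * (Real.log (a + e) - Real.log a) ≤ e := by
    have := mul_le_mul_of_nonneg_left hlog ha
    rwa [mul_div_cancel₀ e ha'.ne'] at this
  simp only [Real.negMulLog, neg_mul]
  nlinarith [mul_nonpos_of_nonneg_of_nonpos he hlogae]

lemma aux_abs_negMulLog_sub_le {a b : ℝ} (ha0 : 0 ≤ a) (hb0 : 0 ≤ b) (ha1 : a ≤ 1) (hb1 : b ≤ 1) :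
    |Real.negMulLog a - Real.negMulLog b| ≤ Real.negMulLog |a - b| + |a - b| := by
  wlog hab : a ≤ b generalizing a b
  · rw [abs_sub_comm, abs_sub_comm a b]
    exact this hb0 ha0 hb1 ha1 (not_le.mp hab).le
  have he0 : 0 ≤ b - a := by linarith
  have habs : |a - b| = b - a := by rw [abs_sub_comm, abs_of_nonneg he0]
  rw [habs]
  have h1 : Real.negMulLog b ≤ Real.negMulLog a + Real.negMulLog (b - a) := by
    have := aux_negMulLog_add_le ha0 he0
    rwa [show a + (b - a) = b by ring] at this
  have h2 : Real.negMulLog a ≤ Real.negMulLog b + (b - a) := by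
    have := aux_negMulLog_le_add ha0 he0 (by linarith : a + (b - a) ≤ 1)
    rwa [show a + (b - a) = b by ring] at this
  have hnn : 0 ≤ Real.negMulLog (b - a) := Real.negMulLog_nonneg he0 (by linarith)
  rw [abs_le]
  constructor <;> linarith

lemma aux_g_mono {t1 t2 : ℝ} (h0 : 0 ≤ t1) (h12 : t1 ≤ t2) (h1 : t2 ≤ 1) :
    Real.negMulLog t1 + t1 ≤ Real.negMulLog t2 + t2 := by
  rcases h0.eq_or_lt with h | h0'
  · rw [← h, Real.negMulLog_zero]
    have := Real.negMulLog_nonneg (by linarith : (0:ℝ) ≤ t2) h1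
    linarith
  rcases h12.eq_or_lt with h | h12'
  · rw [h]
  have ht2 : 0 < t2 := lt_trans h0' h12'
  have hl : Real.log t2 - Real.log t1 ≤ t2 / t1 - 1 := by
    rw [← Real.log_div ht2.ne' h0'.ne']
    exact Real.log_le_sub_one_of_pos (by positivity)
  have hlt2 : Real.log t2 ≤ 0 := Real.log_nonpos ht2.le h1
  have h1' : t1 * (Real.log t2 - Real.log t1) ≤ t2 - t1 := by
    have := mul_le_mul_of_nonneg_left hl h0'.le
    rw [mul_sub] at this
    rw [mul_sub]
    have hx : t1 * (t2 / t1) = t2 := by field_simp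
    nlinarith
  simp only [Real.negMulLog, neg_mul]
  nlinarith [mul_nonpos_of_nonneg_of_nonpos (by linarith : (0:ℝ) ≤ t2 - t1) hlt2]

lemma aux_sum_negMulLog_le {k : ℕ} (hk : 0 < k) (e : Fin k → ℝ) (he : ∀ x, 0 ≤ e x) :
    ∑ x, Real.negMulLog (e x) ≤ Real.negMulLog (∑ x, e x) + (∑ x, e x) * Real.log k := by
  have hT0 : 0 ≤ ∑ x, e x := Finset.sum_nonneg fun x _ => he x
  rcases hT0.eq_or_lt with h | hT'
  · have hz : ∀ x ∈ Finset.univ, e x = 0 := fun x hx =>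
      (Finset.sum_eq_zero_iff_of_nonneg (fun i _ => he i)).mp h.symm x hx
    rw [Finset.sum_congr rfl fun x hx => by rw [hz x hx, Real.negMulLog_zero]]
    simp [← h]
  · have hk' : (0:ℝ) < k := by exact_mod_cast hk
    have hjen := Real.concaveOn_negMulLog.le_map_sum
      (t := Finset.univ) (w := fun _ : Fin k => (k:ℝ)⁻¹) (p := e)
      (fun i _ => by positivity)
      (by show ∑ _i : Fin k, (k:ℝ)⁻¹ = 1; rw [Finset.sum_const, Finset.card_univ, Fintype.card_fin, nsmul_eq_mul]; exact mul_inv_cancel₀ hk'.ne')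
      (fun i _ => Set.mem_Ici.mpr (he i))
    simp only [smul_eq_mul] at hjen
    rw [← Finset.mul_sum] at hjen
    set T := ∑ x, e x
    have hmul : Real.negMulLog ((k:ℝ)⁻¹ * T)
        = (k:ℝ)⁻¹ * (Real.negMulLog T + T * Real.log k) := by
      rw [Real.negMulLog_mul]
      have : Real.negMulLog ((k:ℝ)⁻¹) = (k:ℝ)⁻¹ * Real.log k := by
        simp [Real.negMulLog, Real.log_inv]
      rw [this]; ring
    rw [show (∑ x : Fin k, (k:ℝ)⁻¹ * e x) = (k:ℝ)⁻¹ * T from (Finset.mul_sum _ _ _).symm,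
      hmul] at hjen
    have := mul_le_mul_of_nonneg_left hjen (le_of_lt hk')
    rw [← mul_assoc, ← mul_assoc, mul_inv_cancel₀ hk'.ne', one_mul, one_mul] at this
    exact this

lemma aux_quad_log {x : ℝ} (h0 : 0 ≤ x) (h1 : x < 1) :
    x + x ^ 2 / 2 ≤ -Real.log (1 - x) := by
  set f : ℝ → ℝ := fun t => -Real.log (1 - t) - t - t ^ 2 / 2 with hf
  have hderiv : ∀ t ∈ Set.Ioo (0:ℝ) 1, HasDerivAt f ((1 - t)⁻¹ - 1 - t) t := by
    intro t ht
    have hne : (1:ℝ) - t ≠ 0 := by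
      intro h; rw [sub_eq_zero] at h; exact absurd h.symm (ne_of_lt ht.2)
    have hl : HasDerivAt (fun t : ℝ => Real.log (1 - t)) ((1 - t)⁻¹ * (-1)) t :=
      (Real.hasDerivAt_log hne).comp t (((hasDerivAt_id t).const_sub 1))
    have hsq : HasDerivAt (fun t : ℝ => t ^ 2 / 2) (2 * t ^ 1 / 2) t :=
      (hasDerivAt_pow 2 t).div_const 2
    have := (hl.neg.sub (hasDerivAt_id t)).sub hsq
    exact this.congr_deriv (by ring)
  have hmono : MonotoneOn f (Set.Ico (0:ℝ) 1) := by
    apply monotoneOn_of_deriv_nonneg (convex_Ico 0 1)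
    · apply ContinuousOn.sub
      apply ContinuousOn.sub
      · apply ContinuousOn.neg
        apply ContinuousOn.log
        · fun_prop
        · intro t ht
          simp only [Set.mem_Ico] at ht
          intro h; rw [sub_eq_zero] at h; exact absurd h.symm (ne_of_lt ht.2)
      · fun_prop
      · fun_prop
    · intro t ht
      rw [interior_Ico] at ht
      exact ((hderiv t ht).differentiableAt).differentiableWithinAt
    · intro t ht
      rw [interior_Ico] at ht
      rw [(hderiv t ht).deriv]
      have h2 : 0 < 1 - t := by linarith [ht.2]
      have hm := mul_inv_cancel₀ h2.ne'
      nlinarith [sq_nonneg t, inv_pos.mpr h2, ht.1]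
  have h00 : (0:ℝ) ∈ Set.Ico (0:ℝ) 1 := by constructor <;> norm_num
  have hxx : x ∈ Set.Ico (0:ℝ) 1 := ⟨h0, h1⟩
  have := hmono h00 hxx h0
  simp only [hf] at this
  norm_num at this
  linarith

lemma aux_key_ineq {δ : ℝ} (h0 : 0 ≤ δ) (h3 : δ ≤ 1/3) :
    Real.negMulLog (3 * δ) + 3 * δ ≤ 2 * Real.binEntropy (2 * δ) := by
  rcases h0.eq_or_lt with h | h0'
  · simp [← h]
  rw [Real.binEntropy_eq_negMulLog_add_negMulLog_one_sub]
  have l2 : Real.log (2 * δ) = Real.log 2 + Real.log δ := Real.log_mul (by norm_num) h0'.ne'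
  have l3 : Real.log (3 * δ) = Real.log 3 + Real.log δ := Real.log_mul (by norm_num) h0'.ne'
  have hD : 2 * δ + (2 * δ) ^ 2 / 2 ≤ -Real.log (1 - 2 * δ) :=
    aux_quad_log (by linarith) (by linarith)
  have hE : (1 - 2 * δ) * (2 * δ + (2 * δ) ^ 2 / 2) ≤ (1 - 2 * δ) * (-Real.log (1 - 2 * δ)) :=
    mul_le_mul_of_nonneg_left hD (by linarith)
  have hnum : (11:ℝ)/9 ≤ 4 * (Real.log 3 - Real.log 2) := by
    have hlog32 : Real.log 3 - Real.log 2 = Real.log (3/2) :=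
      (Real.log_div (by norm_num) (by norm_num)).symm
    have hexp : Real.exp (11/36 : ℝ) ≤ 36/25 := by
      have h1 : (25:ℝ)/36 ≤ Real.exp (-(11/36 : ℝ)) := by
        linarith [Real.add_one_le_exp (-(11/36 : ℝ))]
      rw [Real.exp_neg] at h1
      have hpos := Real.exp_pos (11/36 : ℝ)
      rw [le_inv_comm₀ (by norm_num) hpos] at h1
      linarith
    have h36 : (11:ℝ)/36 ≤ Real.log (3/2) := by
      rw [Real.le_log_iff_exp_le (by norm_num)]
      linarith
    rw [hlog32]; linarith
  have hlogδ : Real.log δ ≤ -Real.log 3 := by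
    have := Real.log_le_log h0' (by linarith : δ ≤ (3:ℝ)⁻¹)
    rwa [Real.log_inv] at this
  have hbr : Real.log δ + 4 * δ + 8 * δ ^ 2 + 4 * Real.log 2 - 3 * Real.log 3 - 1 ≤ 0 := by
    nlinarith
  have hprod : δ * (Real.log δ + 4 * δ + 8 * δ ^ 2 + 4 * Real.log 2 - 3 * Real.log 3 - 1) ≤ 0 :=
    mul_nonpos_of_nonneg_of_nonpos h0 hbr
  simp only [Real.negMulLog, neg_mul]
  rw [l2, l3]
  nlinarith [hprod, hE]

/-- Perturbing a distribution on `k` states by `α` with `∑|α| = δ ≤ 1/3` and renormalizing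
changes entropy by at most `2 H_b(2δ) + 3δ log k`. -/
theorem stmt3 (k : ℕ) (p α : Fin k → ℝ) (δ : ℝ)
    (hp0 : ∀ x, 0 ≤ p x) (hpsum : ∑ x, p x = 1)
    (hpα : ∀ x, 0 ≤ p x + α x) (hδ : ∑ x, |α x| = δ) (hδ3 : δ ≤ 1/3) :
    |Hfin (fun x => (p x + α x) / (1 + ∑ y, α y)) - Hfin p|
      ≤ 2 * Real.binEntropy (2 * δ) + 3 * δ * Real.log k := by
  rcases Nat.eq_zero_or_pos k with hk | hk
  · subst hk; simp at hpsum
  have hδ0 : 0 ≤ δ := hδ ▸ Finset.sum_nonneg fun x _ => abs_nonneg _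
  set s : ℝ := ∑ y, α y with hs
  have hsabs : |s| ≤ δ := hδ ▸ Finset.abs_sum_le_sum_abs _ _
  have hs1 : 1 - δ ≤ 1 + s := by
    have := (abs_le.mp hsabs).1; linarith
  have hspos : 0 < 1 + s := by linarith
  set q : Fin k → ℝ := fun x => (p x + α x) / (1 + s) with hq
  have hqsum : ∑ x, q x = 1 := by
    rw [hq, ← Finset.sum_div, Finset.sum_add_distrib, hpsum]
    field_simp
    rfl
  have hq0 : ∀ x, 0 ≤ q x := fun x => div_nonneg (hpα x) hspos.le
  have hq1 : ∀ x, q x ≤ 1 := by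
    intro x
    have := Finset.single_le_sum (f := q) (fun i _ => hq0 i) (Finset.mem_univ x)
    rw [hqsum] at this; exact this
  have hp1 : ∀ x, p x ≤ 1 := by
    intro x
    have := Finset.single_le_sum (f := p) (fun i _ => hp0 i) (Finset.mem_univ x)
    rw [hpsum] at this; exact this
  set T : ℝ := ∑ x, |q x - p x| with hTdef
  have hT0 : 0 ≤ T := Finset.sum_nonneg fun x _ => abs_nonneg _
  have hT3 : T ≤ 3 * δ := by
    have hterm : ∀ x, |q x - p x| ≤ (|α x| + δ * p x) / (1 + s) := by
      intro x
      have hd : q x - p x = (α x - s * p x) / (1 + s) := by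
        rw [hq]; field_simp; ring
      rw [hd, abs_div, abs_of_pos hspos]
      have hnum : |α x - s * p x| ≤ |α x| + δ * p x := calc |α x - s * p x| ≤ |α x| + |s * p x| := abs_sub _ _
        _ = |α x| + |s| * p x := by rw [abs_mul, abs_of_nonneg (hp0 x)]
        _ ≤ |α x| + δ * p x := by
            have := mul_le_mul_of_nonneg_right hsabs (hp0 x); linarith
      gcongr
    calc T ≤ ∑ x, (|α x| + δ * p x) / (1 + s) := Finset.sum_le_sum fun x _ => hterm x
      _ = (δ + δ) / (1 + s) := by
          rw [← Finset.sum_div, Finset.sum_add_distrib, hδ, ← Finset.mul_sum, hpsum, mul_one]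
      _ ≤ 3 * δ := by
          rw [div_le_iff₀ hspos]; nlinarith
  have hstep1 : |Hfin q - Hfin p| ≤ ∑ x, (Real.negMulLog |q x - p x| + |q x - p x|) := by
    rw [Hfin, Hfin, ← Finset.sum_sub_distrib]
    refine (Finset.abs_sum_le_sum_abs _ _).trans (Finset.sum_le_sum fun x _ => ?_)
    exact aux_abs_negMulLog_sub_le (hq0 x) (hp0 x) (hq1 x) (hp1 x)
  have hstep2 : ∑ x, Real.negMulLog |q x - p x| ≤ Real.negMulLog T + T * Real.log k :=
    aux_sum_negMulLog_le hk _ (fun x => abs_nonneg _)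
  have hmono : Real.negMulLog T + T ≤ Real.negMulLog (3 * δ) + 3 * δ :=
    aux_g_mono hT0 hT3 (by linarith)
  have hkey := aux_key_ineq hδ0 hδ3
  have hlogk : 0 ≤ Real.log k := Real.log_nonneg (by exact_mod_cast hk)
  have hTlogk : T * Real.log k ≤ 3 * δ * Real.log k := mul_le_mul_of_nonneg_right hT3 hlogk
  rw [Finset.sum_add_distrib] at hstep1
  calc |Hfin q - Hfin p|
      ≤ (∑ x, Real.negMulLog |q x - p x|) + T := hstep1
    _ ≤ (Real.negMulLog T + T * Real.log k) + T := by linarith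
    _ ≤ (Real.negMulLog (3 * δ) + 3 * δ) + 3 * δ * Real.log k := by linarith
    _ ≤ 2 * Real.binEntropy (2 * δ) + 3 * δ * Real.log k := by linarith
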